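/- Bellman's inequality for the characteristic optimal control problem: let Δu be a control and let t ≤ t' be points of [t0,t1]. If both sets { C(t,w) : w a control with E(t,w) = E(t,Δu) } and { C(t',w) : w a control with E(t',w) = E(t',Δu) } are bounded below in ℝ, then C(t,Δu) − Q(t, E(t,Δu)) ≤ C(t',Δu) − Q(t', E(t',Δu)); i.e., the deviation of the cost of Δu from the value function is non-decreasing in time. (Lemma 4.5.) -/

import Mathlib

open MeasureTheory Set

noncomputable section

/-- A control: a measurable, essentially bounded map `ℝ → ℝ^k`. -/
def IsControl (k : ℕ) (u : ℝ → Fin k → ℝ) : Prop :=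
  Measurable u ∧ ∃ C : ℝ, ∀ᵐ t : ℝ, ‖u t‖ ≤ C

/-- The endpoint map `E_a(τ, Δu) = ∫_a^τ A(t) · Δu(t) dt`. -/
def epMap (k m : ℕ) (A : ℝ → Matrix (Fin m) (Fin k) ℝ) (a τ : ℝ)
    (u : ℝ → Fin k → ℝ) : Fin m → ℝ :=
  ∫ t in a..τ, (A t).mulVec (u t)

/-- The reachable set `R(a,τ)` of the characteristic linear control system. -/
def reach (k m : ℕ) (A : ℝ → Matrix (Fin m) (Fin k) ℝ) (a τ : ℝ) :
    Set (Fin m → ℝ) :=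
  { v | ∃ u, IsControl k u ∧ epMap k m A a τ u = v }

/-- The quadratic cost `C_a(τ, Δu) = ∫_a^τ ⟨Δu(t), W(t)·E_a(t,Δu)⟩ dt` of the
characteristic optimal control problem. -/
def cost (k m : ℕ) (A : ℝ → Matrix (Fin m) (Fin k) ℝ)
    (W : ℝ → Matrix (Fin k) (Fin m) ℝ) (a τ : ℝ) (u : ℝ → Fin k → ℝ) : ℝ :=
  ∫ t in a..τ, dotProduct (u t) ((W t).mulVec (epMap k m A a t u))

/-- The set of costs of controls steering the system from `0` at time `a`
to `v` at time `τ`. -/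
def costSet (k m : ℕ) (A : ℝ → Matrix (Fin m) (Fin k) ℝ)
    (W : ℝ → Matrix (Fin k) (Fin m) ℝ) (a τ : ℝ) (v : Fin m → ℝ) : Set ℝ :=
  { c | ∃ u, IsControl k u ∧ epMap k m A a τ u = v ∧ cost k m A W a τ u = c }

lemma pi_mulVec_norm_le {m k : ℕ} (M : Matrix (Fin m) (Fin k) ℝ) (v : Fin k → ℝ) (C : ℝ)
    (hC : 0 ≤ C) (hM : ∀ i j, |M i j| ≤ C) : ‖M.mulVec v‖ ≤ k * C * ‖v‖ := by
  rw [pi_norm_le_iff_of_nonneg (by positivity)]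
  intro i
  rw [Real.norm_eq_abs]
  calc |∑ j, M i j * v j| ≤ ∑ j, |M i j * v j| := Finset.abs_sum_le_sum_abs _ _
    _ ≤ ∑ _j : Fin k, C * ‖v‖ := Finset.sum_le_sum fun j _ => by
        rw [abs_mul]
        exact mul_le_mul (hM i j) ((Real.norm_eq_abs _) ▸ norm_le_pi_norm v j)
          (abs_nonneg _) hC
    _ = k * C * ‖v‖ := by simp [Finset.sum_const]; ring

lemma abs_dot_le {k : ℕ} (v w : Fin k → ℝ) : |dotProduct v w| ≤ k * ‖v‖ * ‖w‖ := by
  calc |∑ j, v j * w j| ≤ ∑ j, |v j * w j| := Finset.abs_sum_le_sum_abs _ _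
    _ ≤ ∑ _j : Fin k, ‖v‖ * ‖w‖ := Finset.sum_le_sum fun j _ => by
        rw [abs_mul]
        exact mul_le_mul ((Real.norm_eq_abs _) ▸ norm_le_pi_norm v j)
          ((Real.norm_eq_abs _) ▸ norm_le_pi_norm w j) (abs_nonneg _) (norm_nonneg _)
    _ = k * ‖v‖ * ‖w‖ := by simp [Finset.sum_const]; ring

lemma meas_mulVecu {m k : ℕ} (A : ℝ → Matrix (Fin m) (Fin k) ℝ)
    (hA : ∀ i j, Measurable fun t => A t i j) {u : ℝ → Fin k → ℝ} (hu : Measurable u) :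
    Measurable fun s => (A s).mulVec (u s) := by
  rw [measurable_pi_iff]
  intro i
  simp only [Matrix.mulVec, dotProduct]
  exact Finset.measurable_sum _ fun j _ => (hA i j).mul ((measurable_pi_apply j).comp hu)

lemma intInt_mulVec {t0 t1 : ℝ} {m k : ℕ} {A : ℝ → Matrix (Fin m) (Fin k) ℝ}
    (hAmeas : ∀ i j, Measurable fun t => A t i j) {CA : ℝ}
    (hAbdd : ∀ s ∈ Set.Icc t0 t1, ∀ i j, |A s i j| ≤ CA) (hCA : 0 ≤ CA)
    {u : ℝ → Fin k → ℝ} (hu : Measurable u) {Cu : ℝ} (hCu : ∀ᵐ s : ℝ, ‖u s‖ ≤ Cu)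
    {a b : ℝ} (hab : Set.uIcc a b ⊆ Set.Icc t0 t1) :
    IntervalIntegrable (fun s => (A s).mulVec (u s)) volume a b := by
  rw [intervalIntegrable_iff]
  apply Integrable.mono' (g := fun _ => (k : ℝ) * CA * Cu)
    (integrableOn_const measure_Ioc_lt_top.ne)
  · exact (meas_mulVecu A hAmeas hu).aestronglyMeasurable
  · filter_upwards [ae_restrict_of_ae hCu, ae_restrict_mem measurableSet_uIoc] with s hs hmem
    have hsI : s ∈ Set.Icc t0 t1 := hab (Set.uIoc_subset_uIcc hmem)
    calc ‖(A s).mulVec (u s)‖ ≤ k * CA * ‖u s‖ :=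
          pi_mulVec_norm_le _ _ _ hCA (hAbdd s hsI)
      _ ≤ k * CA * Cu := by
          apply mul_le_mul_of_nonneg_left hs (by positivity)

lemma contOn_epMap {t0 t1 : ℝ} (h01 : t0 ≤ t1) {m k : ℕ} {A : ℝ → Matrix (Fin m) (Fin k) ℝ}
    (hAmeas : ∀ i j, Measurable fun t => A t i j) {CA : ℝ}
    (hAbdd : ∀ s ∈ Set.Icc t0 t1, ∀ i j, |A s i j| ≤ CA) (hCA : 0 ≤ CA)
    {u : ℝ → Fin k → ℝ} (hu : Measurable u) {Cu : ℝ} (hCu : ∀ᵐ s : ℝ, ‖u s‖ ≤ Cu) :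
    ContinuousOn (fun τ => epMap k m A t0 τ u) (Set.Icc t0 t1) := by
  have h : Set.uIcc t0 t1 = Set.Icc t0 t1 := Set.uIcc_of_le h01
  have hint : IntervalIntegrable (fun s => (A s).mulVec (u s)) volume t0 t1 :=
    intInt_mulVec hAmeas hAbdd hCA hu hCu (le_of_eq h)
  have := intervalIntegral.continuousOn_primitive_interval
    (f := fun s => (A s).mulVec (u s)) (μ := volume) (a := t0) (b := t1) ?_
  · rwa [h] at this
  · rw [h]
    rw [intervalIntegrable_iff_integrableOn_Icc_of_le h01] at hint
    exact hint

lemma bound_epMap {t0 t1 : ℝ} (h01 : t0 ≤ t1) {m k : ℕ} {A : ℝ → Matrix (Fin m) (Fin k) ℝ}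
    (hAmeas : ∀ i j, Measurable fun t => A t i j) {CA : ℝ}
    (hAbdd : ∀ s ∈ Set.Icc t0 t1, ∀ i j, |A s i j| ≤ CA) (hCA : 0 ≤ CA)
    {u : ℝ → Fin k → ℝ} (hu : Measurable u) {Cu : ℝ} (hCu : ∀ᵐ s : ℝ, ‖u s‖ ≤ Cu) :
    ∃ CE : ℝ, 0 ≤ CE ∧ ∀ s ∈ Set.Icc t0 t1, ‖epMap k m A t0 s u‖ ≤ CE := by
  obtain ⟨CE, hCE⟩ := isCompact_Icc.exists_bound_of_continuousOn
    (contOn_epMap h01 hAmeas hAbdd hCA hu hCu)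
  refine ⟨max CE 0, le_max_right _ _, fun s hs => (hCE s hs).trans (le_max_left _ _)⟩

lemma intInt_costInt {t0 t1 : ℝ} (h01 : t0 ≤ t1) {m k : ℕ} {A : ℝ → Matrix (Fin m) (Fin k) ℝ}
    (hAmeas : ∀ i j, Measurable fun t => A t i j) {CA : ℝ}
    (hAbdd : ∀ s ∈ Set.Icc t0 t1, ∀ i j, |A s i j| ≤ CA) (hCA : 0 ≤ CA)
    {W : ℝ → Matrix (Fin k) (Fin m) ℝ} (hWmeas : ∀ i j, Measurable fun t => W t i j) {CW : ℝ}
    (hWbdd : ∀ s ∈ Set.Icc t0 t1, ∀ i j, |W s i j| ≤ CW) (hCW : 0 ≤ CW)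
    {u : ℝ → Fin k → ℝ} (hu : Measurable u) {Cu : ℝ} (hCu : ∀ᵐ s : ℝ, ‖u s‖ ≤ Cu)
    {a b : ℝ} (hab : Set.uIcc a b ⊆ Set.Icc t0 t1) :
    IntervalIntegrable
      (fun s => dotProduct (u s) ((W s).mulVec (epMap k m A t0 s u))) volume a b := by
  obtain ⟨CE, hCE0, hCE⟩ := bound_epMap h01 hAmeas hAbdd hCA hu hCu
  have hsub : Set.uIoc a b ⊆ Set.Icc t0 t1 := Set.uIoc_subset_uIcc.trans hab
  have hE : AEStronglyMeasurable (fun s => epMap k m A t0 s u)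
      (volume.restrict (Set.uIoc a b)) :=
    (ContinuousOn.mono (contOn_epMap h01 hAmeas hAbdd hCA hu hCu) hsub).aestronglyMeasurable
      measurableSet_uIoc
  rw [intervalIntegrable_iff]
  apply Integrable.mono' (g := fun _ => (k : ℝ) * Cu * ((m : ℝ) * CW * CE))
    (integrableOn_const measure_Ioc_lt_top.ne)
  · simp only [dotProduct, Matrix.mulVec]
    apply Finset.aestronglyMeasurable_fun_sum
    intro i _
    apply AEStronglyMeasurable.mul
    · exact ((measurable_pi_apply i).comp hu).aestronglyMeasurable
    · apply Finset.aestronglyMeasurable_fun_sum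
      intro j _
      exact ((hWmeas i j).aestronglyMeasurable).mul
        ((continuous_apply j).comp_aestronglyMeasurable hE)
  · filter_upwards [ae_restrict_of_ae hCu, ae_restrict_mem measurableSet_uIoc] with s hs hmem
    have hsI : s ∈ Set.Icc t0 t1 := hsub hmem
    rw [Real.norm_eq_abs]
    calc |dotProduct (u s) ((W s).mulVec (epMap k m A t0 s u))|
        ≤ k * ‖u s‖ * ‖(W s).mulVec (epMap k m A t0 s u)‖ := abs_dot_le _ _
      _ ≤ k * Cu * ((m : ℝ) * CW * CE) := by
          have h1 : ‖(W s).mulVec (epMap k m A t0 s u)‖ ≤ m * CW * ‖epMap k m A t0 s u‖ :=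
            pi_mulVec_norm_le _ _ _ hCW (hWbdd s hsI)
          have h2 : ‖epMap k m A t0 s u‖ ≤ CE := hCE s hsI
          have hCu0 : (0:ℝ) ≤ Cu := (norm_nonneg _).trans hs
          have h5 : ‖(W s).mulVec (epMap k m A t0 s u)‖ ≤ (m : ℝ) * CW * CE :=
            h1.trans (mul_le_mul_of_nonneg_left h2 (by positivity))
          gcongr

/-- **Lemma 4.5 (Bellman's inequality).** For a control `Δu` and `t ≤ t'` in
`[t0,t1]`, if the cost sets over the endpoints `E(t,Δu)` and `E(t',Δu)` are
bounded below, then the deviation of the cost of `Δu` from the value function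
is non-decreasing in time:
`C(t,Δu) − Q(t,E(t,Δu)) ≤ C(t',Δu) − Q(t',E(t',Δu))`. -/
theorem bellman_inequality
    (t0 t1 : ℝ) (ht : t0 < t1) (k m : ℕ)
    (A : ℝ → Matrix (Fin m) (Fin k) ℝ)
    (hAmeas : ∀ i j, Measurable fun t => A t i j)
    (hAbdd : ∃ C : ℝ, ∀ t ∈ Set.Icc t0 t1, ∀ i j, |A t i j| ≤ C)
    (W : ℝ → Matrix (Fin k) (Fin m) ℝ)
    (hWmeas : ∀ i j, Measurable fun t => W t i j)
    (hWbdd : ∃ C : ℝ, ∀ t ∈ Set.Icc t0 t1, ∀ i j, |W t i j| ≤ C)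
    (Δu : ℝ → Fin k → ℝ) (hΔu : IsControl k Δu)
    (t t' : ℝ) (htt : t ∈ Set.Icc t0 t1) (htt' : t' ∈ Set.Icc t0 t1)
    (hle : t ≤ t')
    (hbdd : BddBelow (costSet k m A W t0 t (epMap k m A t0 t Δu)))
    (hbdd' : BddBelow (costSet k m A W t0 t' (epMap k m A t0 t' Δu))) :
    cost k m A W t0 t Δu - sInf (costSet k m A W t0 t (epMap k m A t0 t Δu)) ≤
      cost k m A W t0 t' Δu -
        sInf (costSet k m A W t0 t' (epMap k m A t0 t' Δu)) := by
  have h01 : t0 ≤ t1 := ht.le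
  obtain ⟨CA₀, hCA₀⟩ := hAbdd
  obtain ⟨CW₀, hCW₀⟩ := hWbdd
  set CA := max CA₀ 0 with hCAdef
  set CW := max CW₀ 0 with hCWdef
  have hCA : ∀ s ∈ Set.Icc t0 t1, ∀ i j, |A s i j| ≤ CA :=
    fun s hs i j => (hCA₀ s hs i j).trans (le_max_left _ _)
  have hCW : ∀ s ∈ Set.Icc t0 t1, ∀ i j, |W s i j| ≤ CW :=
    fun s hs i j => (hCW₀ s hs i j).trans (le_max_left _ _)
  have hCA0 : (0:ℝ) ≤ CA := le_max_right _ _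
  have hCW0 : (0:ℝ) ≤ CW := le_max_right _ _
  obtain ⟨hΔuM, Cu, hCu⟩ := hΔu
  -- subinterval inclusions
  have hsub1 : Set.uIcc t0 t ⊆ Set.Icc t0 t1 := by
    rw [Set.uIcc_of_le htt.1]; exact Set.Icc_subset_Icc le_rfl htt.2
  have hsub2 : Set.uIcc t t' ⊆ Set.Icc t0 t1 := by
    rw [Set.uIcc_of_le hle]; exact Set.Icc_subset_Icc htt.1 htt'.2
  -- the value δ by which the cost of Δu grows from t to t'
  set δ := cost k m A W t0 t' Δu - cost k m A W t0 t Δu with hδdef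
  set S := costSet k m A W t0 t (epMap k m A t0 t Δu) with hSdef
  set S' := costSet k m A W t0 t' (epMap k m A t0 t' Δu) with hS'def
  have hSne : S.Nonempty := ⟨cost k m A W t0 t Δu, Δu, ⟨hΔuM, Cu, hCu⟩, rfl, rfl⟩
  -- cost additivity for Δu
  have hcostΔu : cost k m A W t0 t Δu +
      (∫ s in t..t', dotProduct (Δu s) ((W s).mulVec (epMap k m A t0 s Δu)))
      = cost k m A W t0 t' Δu :=
    intervalIntegral.integral_add_adjacent_intervals
      (intInt_costInt h01 hAmeas hCA hCA0 hWmeas hCW hCW0 hΔuM hCu hsub1)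
      (intInt_costInt h01 hAmeas hCA hCA0 hWmeas hCW hCW0 hΔuM hCu hsub2)
  -- key shift property
  have key : ∀ c ∈ S, c + δ ∈ S' := by
    rintro c ⟨w, ⟨hwM, Cw, hCw⟩, hEw, hCw_eq⟩
    classical
    set v : ℝ → Fin k → ℝ := fun s => if s ≤ t then w s else Δu s with hvdef
    have hvM : Measurable v := Measurable.ite measurableSet_Iic hwM hΔuM
    have hCv : ∀ᵐ s : ℝ, ‖v s‖ ≤ max Cw Cu := by
      filter_upwards [hCw, hCu] with s h1 h2
      by_cases hst : s ≤ t
      · simp only [hvdef, if_pos hst]; exact h1.trans (le_max_left _ _)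
      · simp only [hvdef, if_neg hst]; exact h2.trans (le_max_right _ _)
    have hvctrl : IsControl k v := ⟨hvM, max Cw Cu, hCv⟩
    -- interval integrabilities
    have hintv1 : IntervalIntegrable (fun s => (A s).mulVec (v s)) volume t0 t :=
      intInt_mulVec hAmeas hCA hCA0 hvM hCv hsub1
    have hintΔ1 : IntervalIntegrable (fun s => (A s).mulVec (Δu s)) volume t0 t :=
      intInt_mulVec hAmeas hCA hCA0 hΔuM hCu hsub1
    -- for s ≤ t : epMap of v equals epMap of w
    have hvle : ∀ s, s ≤ t → epMap k m A t0 s v = epMap k m A t0 s w := by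
      intro s hs
      apply intervalIntegral.integral_congr
      intro r hr
      have hrle : r ≤ t := hr.2.trans (max_le htt.1 hs)
      simp [hvdef, if_pos hrle]
    -- epMap of v equals epMap of Δu on [t, t1]
    have hv_ep : ∀ s ∈ Set.Icc t t1, epMap k m A t0 s v = epMap k m A t0 s Δu := by
      intro s hs
      have hsub3 : Set.uIcc t s ⊆ Set.Icc t0 t1 := by
        rw [Set.uIcc_of_le hs.1]; exact Set.Icc_subset_Icc htt.1 hs.2
      have hintv2 : IntervalIntegrable (fun r => (A r).mulVec (v r)) volume t s :=
        intInt_mulVec hAmeas hCA hCA0 hvM hCv hsub3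
      have hintΔ2 : IntervalIntegrable (fun r => (A r).mulVec (Δu r)) volume t s :=
        intInt_mulVec hAmeas hCA hCA0 hΔuM hCu hsub3
      have hadd_v : epMap k m A t0 t v + (∫ r in t..s, (A r).mulVec (v r))
          = epMap k m A t0 s v :=
        intervalIntegral.integral_add_adjacent_intervals hintv1 hintv2
      have hadd_Δ : epMap k m A t0 t Δu + (∫ r in t..s, (A r).mulVec (Δu r))
          = epMap k m A t0 s Δu :=
        intervalIntegral.integral_add_adjacent_intervals hintΔ1 hintΔ2
      have htail : (∫ r in t..s, (A r).mulVec (v r))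
          = ∫ r in t..s, (A r).mulVec (Δu r) := by
        apply intervalIntegral.integral_congr_ae
        apply MeasureTheory.ae_of_all
        intro x hx
        rw [Set.uIoc_of_le hs.1] at hx
        simp [hvdef, if_neg (not_le.2 hx.1)]
      rw [← hadd_v, ← hadd_Δ, htail, hvle t le_rfl, hEw]
    -- cost of v up to t equals cost of w up to t
    have hcost1 : cost k m A W t0 t v = c := by
      rw [← hCw_eq]
      apply intervalIntegral.integral_congr
      intro r hr
      rw [Set.uIcc_of_le htt.1] at hr
      have hrt : r ≤ t := hr.2
      simp only [hvle r hrt]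
      simp only [hvdef, if_pos hrt]
    -- cost additivity for v
    have hcostv : cost k m A W t0 t v +
        (∫ s in t..t', dotProduct (v s) ((W s).mulVec (epMap k m A t0 s v)))
        = cost k m A W t0 t' v :=
      intervalIntegral.integral_add_adjacent_intervals
        (intInt_costInt h01 hAmeas hCA hCA0 hWmeas hCW hCW0 hvM hCv hsub1)
        (intInt_costInt h01 hAmeas hCA hCA0 hWmeas hCW hCW0 hvM hCv hsub2)
    have htail2 : (∫ s in t..t', dotProduct (v s) ((W s).mulVec (epMap k m A t0 s v)))
        = ∫ s in t..t', dotProduct (Δu s) ((W s).mulVec (epMap k m A t0 s Δu)) := by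
      apply intervalIntegral.integral_congr_ae
      apply MeasureTheory.ae_of_all
      intro x hx
      rw [Set.uIoc_of_le hle] at hx
      have hxmem : x ∈ Set.Icc t t1 := ⟨hx.1.le, hx.2.trans htt'.2⟩
      rw [hv_ep x hxmem]
      simp [hvdef, if_neg (not_le.2 hx.1)]
    refine ⟨v, hvctrl, hv_ep t' ⟨hle, htt'.2⟩, ?_⟩
    rw [← hcostv, htail2, hcost1, hδdef]
    rw [← hcostΔu]
    ring
  -- conclude
  have h2 : sInf S' - δ ≤ sInf S := by
    apply le_csInf hSne
    intro c hc
    have := csInf_le hbdd' (key c hc)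
    linarith
  have hC' : cost k m A W t0 t' Δu = cost k m A W t0 t Δu + δ := by rw [hδdef]; ring
  linarith
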